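/- Let B(T) = ∫_0^T γ^t r(s_t, π'(s_t)) dt + γ^T V^π(s_T) where s_t follows ds/dt = F(s_t, π'(s_t)). Then B is differentiable with B'(T) = γ^T · A^π(s_T, π'(s_T)), where A^π(s,a) = r(s,a) + ∇V^π(s)·F(s,a) + log(γ) V^π(s). -/

import Mathlib

open Real Filter intervalIntegral

/-- Derivative of `B(T) = ∫_0^T γ^t r(s_t, π'(s_t)) dt + γ^T V^π(s_T)`:
`B'(T) = γ^T A^π(s_T, π'(s_T))` with
`A^π(s,a) = r(s,a) + ∇V^π(s)·F(s,a) + log(γ) V^π(s)`. -/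
theorem derivative_of_B
    {n : ℕ} {A : Type*} (γ : ℝ) (hγ0 : 0 < γ) (hγ1 : γ < 1)
    (F : EuclideanSpace ℝ (Fin n) → A → EuclideanSpace ℝ (Fin n))
    (r : EuclideanSpace ℝ (Fin n) → A → ℝ)
    (pol' : EuclideanSpace ℝ (Fin n) → A)
    (Vpol : EuclideanSpace ℝ (Fin n) → ℝ) (hVpol : ContDiff ℝ 1 Vpol)
    (s : ℝ → EuclideanSpace ℝ (Fin n))
    (hs : ∀ t : ℝ, HasDerivAt s (F (s t) (pol' (s t))) t)
    (hrcont : Continuous (fun t : ℝ => r (s t) (pol' (s t)))) :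
    ∀ T : ℝ, HasDerivAt (fun T : ℝ =>
        (∫ t in (0:ℝ)..T, Real.exp (t * Real.log γ) * r (s t) (pol' (s t)))
        + Real.exp (T * Real.log γ) * Vpol (s T))
      (Real.exp (T * Real.log γ) *
        (r (s T) (pol' (s T)) + fderiv ℝ Vpol (s T) (F (s T) (pol' (s T)))
          + Real.log γ * Vpol (s T))) T := by
  intro T
  have hcont : Continuous (fun t : ℝ => Real.exp (t * Real.log γ) * r (s t) (pol' (s t))) :=
    (Real.continuous_exp.comp (continuous_id.mul continuous_const)).mul hrcont
  have h1 : HasDerivAt (fun T : ℝ =>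
      ∫ t in (0:ℝ)..T, Real.exp (t * Real.log γ) * r (s t) (pol' (s t)))
      (Real.exp (T * Real.log γ) * r (s T) (pol' (s T))) T :=
    intervalIntegral.integral_hasDerivAt_right (hcont.intervalIntegrable 0 T)
      (hcont.stronglyMeasurableAtFilter _ _) hcont.continuousAt
  have he : HasDerivAt (fun T : ℝ => Real.exp (T * Real.log γ))
      (Real.exp (T * Real.log γ) * Real.log γ) T :=
by simpa using ((hasDerivAt_id T).mul_const (Real.log γ)).exp
  have hV : HasDerivAt (fun T : ℝ => Vpol (s T))
      (fderiv ℝ Vpol (s T) (F (s T) (pol' (s T)))) T := by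
    have hd : DifferentiableAt ℝ Vpol (s T) := (hVpol.differentiable one_ne_zero) (s T)
    exact (hd.hasFDerivAt.comp_hasDerivAt T (hs T))
  have h2 := he.mul hV
  have := h1.add h2
  exact this.congr_deriv (by ring)
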